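/- Let s, d be natural numbers, C : Fin s → ℕ, r ≥ 0 a real number, and define the extended rate function ρ : (Fin s → ℤ) → ℝ by ρ(S) = r · ∏_k b(S k, C k), where b(a, c) = choose a.toNat c if a ≥ 0 and 0 otherwise. Let S : Fin s → ℤ, let O : Fin d → Fin s → ℤ be stoichiometry vectors with positive parts O⁺ j k = max(O j k, 0) and negative parts O⁻ j k = min(O j k, 0), fix a reaction index i, and let eL, eN : Fin d → ℕ satisfy eL j ≤ eN j for all j. Writing δ(n) = min(n, 1), the following two inequalities hold: (1) ρ(S + ∑_j (eL j) • O⁺ j) ≤ ρ(S + ∑_j (eN j) • O⁺ j); (2) ρ(S + ∑_j (eL j) • O⁻ j − δ(eL i) • O⁻ i) ≥ ρ(S + ∑_j (eN j) • O⁻ j − δ(eN i) • O⁻ i). -/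

import Mathlib

/-- Binomial coefficient extended to an integer upper argument: `0` when negative. -/
noncomputable def extBinom (a : ℤ) (c : ℕ) : ℝ :=
  if 0 ≤ a then (a.toNat.choose c : ℝ) else 0

/-- The extended rate function of a reaction with input counts `C` and rate constant
`r` at state `S`: `r · ∏ k, extBinom (S k) (C k)`. -/
noncomputable def extRate (s : ℕ) (C : Fin s → ℕ) (r : ℝ) (S : Fin s → ℤ) : ℝ :=
  r * ∏ k, extBinom (S k) (C k)

lemma extBinom_nonneg (a : ℤ) (c : ℕ) : 0 ≤ extBinom a c := by
  unfold extBinom; split <;> positivity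

lemma extBinom_mono {a b : ℤ} (c : ℕ) (hab : a ≤ b) : extBinom a c ≤ extBinom b c := by
  unfold extBinom
  by_cases ha : 0 ≤ a
  · rw [if_pos ha, if_pos (ha.trans hab)]
    exact_mod_cast Nat.choose_le_choose c (Int.toNat_le_toNat hab)
  · rw [if_neg ha]
    split <;> positivity

lemma extRate_mono (s : ℕ) (C : Fin s → ℕ) (r : ℝ) (hr : 0 ≤ r)
    {A B : Fin s → ℤ} (h : ∀ k, A k ≤ B k) :
    extRate s C r A ≤ extRate s C r B := by
  unfold extRate
  apply mul_le_mul_of_nonneg_left _ hr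
  exact Finset.prod_le_prod (fun k _ => extBinom_nonneg _ _)
    (fun k _ => extBinom_mono _ (h k))

/-- Inheritance of the stopping conditions C1 and C2 by the left child node, whose
occurrence counts `eL` are componentwise at most those of the parent `eN`.
Here `δ(n) = min n 1`. -/
theorem extRate_left_child (s d : ℕ) (C : Fin s → ℕ) (r : ℝ) (hr : 0 ≤ r)
    (S : Fin s → ℤ) (O : Fin d → Fin s → ℤ) (i : Fin d) (eL eN : Fin d → ℕ)
    (he : ∀ j, eL j ≤ eN j) :
    (extRate s C r (S + ∑ j, (eL j) • fun k => max (O j k) 0) ≤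
      extRate s C r (S + ∑ j, (eN j) • fun k => max (O j k) 0)) ∧
    (extRate s C r
        (S + (∑ j, (eL j) • fun k => min (O j k) 0) -
          (min (eL i) 1) • fun k => min (O i k) 0) ≥
      extRate s C r
        (S + (∑ j, (eN j) • fun k => min (O j k) 0) -
          (min (eN i) 1) • fun k => min (O i k) 0)) := by
  constructor
  · apply extRate_mono s C r hr
    intro k
    simp only [Pi.add_apply, Finset.sum_apply, Pi.smul_apply, nsmul_eq_mul, Pi.mul_apply, Pi.natCast_apply]
    apply add_le_add_right
    apply Finset.sum_le_sum
    intro j _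
    exact mul_le_mul_of_nonneg_right (by exact_mod_cast he j) (le_max_right _ _)
  · apply extRate_mono s C r hr
    intro k
    simp only [Pi.add_apply, Pi.sub_apply, Finset.sum_apply, Pi.smul_apply, nsmul_eq_mul, Pi.mul_apply, Pi.natCast_apply]
    have hm0 : ∀ j, min (O j k) 0 ≤ 0 := fun j => min_le_right _ _
    have hsplit : ∀ e : Fin d → ℕ,
        (∑ j, (e j : ℤ) * min (O j k) 0) - ((min (e i) 1 : ℕ) : ℤ) * min (O i k) 0
          = ((e i - min (e i) 1 : ℕ) : ℤ) * min (O i k) 0 +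
            ∑ j ∈ Finset.univ.erase i, (e j : ℤ) * min (O j k) 0 := by
      intro e
      rw [← Finset.add_sum_erase _ _ (Finset.mem_univ i)]
      push_cast [Nat.cast_sub (min_le_left (e i) 1)]
      ring
    rw [add_sub_assoc, add_sub_assoc, hsplit eL, hsplit eN]
    apply add_le_add_right
    apply add_le_add
    · have h1 : eL i - min (eL i) 1 ≤ eN i - min (eN i) 1 := by have := he i; omega
      exact mul_le_mul_of_nonpos_right (by exact_mod_cast h1) (hm0 i)
    · apply Finset.sum_le_sum
      intro j _
      exact mul_le_mul_of_nonpos_right (by exact_mod_cast he j) (hm0 j)
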